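/- Let Γ : ℝ × [0,T] → ℝ be C^{2,1} with Γ(r,t) > 0 for all (r,t), and set H := -1/Γ. Then for every (r,t) ∈ ℝ × [0,T], H satisfies H_t + r·H + (μ̄(r)-σ̄(r)λ(r))·H_r + (1/2)·σ̄(r)²·H_rr - σ̄(r)²·H_r²/H = 0 if and only if Γ satisfies the linear equation Γ_t - r·Γ + (μ̄(r)-σ̄(r)λ(r))·Γ_r + (1/2)·σ̄(r)²·Γ_rr = 0; in fact the first expression equals Γ^{-2} times the second. -/

import Mathlib

/- STATEMENT 6: Let Γ be C^{2,1} with Γ > 0 and set H := -1/Γ. Then H satisfies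
H_t + rH + (μ̄(r)-σ̄(r)λ(r))H_r + ½σ̄(r)²H_rr - σ̄(r)²H_r²/H = 0 iff Γ satisfies the
linear equation Γ_t - rΓ + (μ̄(r)-σ̄(r)λ(r))Γ_r + ½σ̄(r)²Γ_rr = 0; in fact the first
expression equals Γ^{-2} times the second. -/
theorem stmt_6
    (T : ℝ) (hT : 0 < T)
    (lam mubar sigbar : ℝ → ℝ)
    (hlam : Continuous lam) (hmubar : Continuous mubar) (hsigbar : Continuous sigbar)
    (Gam Gamt Gamr Gamrr : ℝ → ℝ → ℝ)
    (hGampos : ∀ r t, 0 < Gam r t)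
    (hGamt : ∀ r t, HasDerivAt (fun s => Gam r s) (Gamt r t) t)
    (hGamr : ∀ r t, HasDerivAt (fun p => Gam p t) (Gamr r t) r)
    (hGamrr : ∀ r t, HasDerivAt (fun p => Gamr p t) (Gamrr r t) r)
    (H Ht Hr Hrr : ℝ → ℝ → ℝ)
    (hHdef : ∀ r t, H r t = -1 / Gam r t)
    (hHt : ∀ r t, HasDerivAt (fun s => H r s) (Ht r t) t)
    (hHr : ∀ r t, HasDerivAt (fun p => H p t) (Hr r t) r)
    (hHrr : ∀ r t, HasDerivAt (fun p => Hr p t) (Hrr r t) r) :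
    ∀ r : ℝ, ∀ t ∈ Set.Icc (0 : ℝ) T,
      (Ht r t + r * H r t + (mubar r - sigbar r * lam r) * Hr r t
          + (1 / 2) * (sigbar r) ^ 2 * Hrr r t - (sigbar r) ^ 2 * (Hr r t) ^ 2 / H r t
        = (1 / (Gam r t) ^ 2) *
          (Gamt r t - r * Gam r t + (mubar r - sigbar r * lam r) * Gamr r t
            + (1 / 2) * (sigbar r) ^ 2 * Gamrr r t)) ∧
      ((Ht r t + r * H r t + (mubar r - sigbar r * lam r) * Hr r t
          + (1 / 2) * (sigbar r) ^ 2 * Hrr r t - (sigbar r) ^ 2 * (Hr r t) ^ 2 / H r t = 0)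
        ↔ (Gamt r t - r * Gam r t + (mubar r - sigbar r * lam r) * Gamr r t
            + (1 / 2) * (sigbar r) ^ 2 * Gamrr r t = 0)) := by
  have hne : ∀ r t, Gam r t ≠ 0 := fun r t => (hGampos r t).ne'
  -- Ht = Gamt / Gam²
  have hHtval : ∀ r t, Ht r t = Gamt r t / (Gam r t) ^ 2 := by
    intro r t
    have h1 : HasDerivAt (fun s => H r s) (Gamt r t / (Gam r t) ^ 2) t := by
      have := ((hGamt r t).inv (hne r t)).neg
      have heq : (fun s => -(Gam r s)⁻¹) = fun s => H r s := by
        funext s; rw [hHdef]; ring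
      change HasDerivAt (fun s => -(Gam r s)⁻¹) _ t at this
      rw [heq] at this
      convert this using 1
      field_simp
    exact (hHt r t).unique h1
  have hHrval : ∀ r t, Hr r t = Gamr r t / (Gam r t) ^ 2 := by
    intro r t
    have h1 : HasDerivAt (fun p => H p t) (Gamr r t / (Gam r t) ^ 2) r := by
      have := ((hGamr r t).inv (hne r t)).neg
      have heq : (fun p => -(Gam p t)⁻¹) = fun p => H p t := by
        funext p; rw [hHdef]; ring
      change HasDerivAt (fun p => -(Gam p t)⁻¹) _ r at this
      rw [heq] at this
      convert this using 1
      field_simp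
    exact (hHr r t).unique h1
  have hHrrval : ∀ r t, Hrr r t
      = Gamrr r t / (Gam r t) ^ 2 - 2 * (Gamr r t) ^ 2 / (Gam r t) ^ 3 := by
    intro r t
    have h1 : HasDerivAt (fun p => Hr p t)
        (Gamrr r t / (Gam r t) ^ 2 - 2 * (Gamr r t) ^ 2 / (Gam r t) ^ 3) r := by
      have h2 : HasDerivAt (fun p => Gamr p t / (Gam p t) ^ 2)
          ((Gamrr r t * (Gam r t) ^ 2 - Gamr r t * (2 * Gam r t * Gamr r t))
            / ((Gam r t) ^ 2) ^ 2) r := by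
        have hsq : HasDerivAt (fun p => (Gam p t) ^ 2) (2 * Gam r t * Gamr r t) r := by
          have := (hGamr r t).pow 2
          change HasDerivAt (fun p => (Gam p t) ^ 2) _ r at this
          simpa [mul_comm, mul_assoc, mul_left_comm] using this
        exact (hGamrr r t).div hsq (pow_ne_zero 2 (hne r t))
      have heq : (fun p => Gamr p t / (Gam p t) ^ 2) = fun p => Hr p t := by
        funext p; rw [hHrval]
      rw [heq] at h2
      convert h2 using 1
      have hG := hne r t
      field_simp
    exact (hHrr r t).unique h1
  intro r t _
  have hG := hne r t
  have key : Ht r t + r * H r t + (mubar r - sigbar r * lam r) * Hr r t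
      + (1 / 2) * (sigbar r) ^ 2 * Hrr r t - (sigbar r) ^ 2 * (Hr r t) ^ 2 / H r t
      = (1 / (Gam r t) ^ 2) *
        (Gamt r t - r * Gam r t + (mubar r - sigbar r * lam r) * Gamr r t
          + (1 / 2) * (sigbar r) ^ 2 * Gamrr r t) := by
    rw [hHtval, hHrval, hHrrval, hHdef]
    have hH : (-1 : ℝ) / Gam r t ≠ 0 := div_ne_zero (by norm_num) hG
    field_simp
    ring
  refine ⟨key, ?_⟩
  rw [key]
  constructor
  · intro h
    rcases mul_eq_zero.1 h with h1 | h1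
    · exact absurd h1 (by positivity)
    · exact h1
  · intro h; rw [h, mul_zero]
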